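/- Let A be a positive operator on H and T, S A-bounded operators. Then r_A(TS ± ST) ≤ ½(‖TS‖_A + ‖ST‖_A + √((‖TS‖_A − ‖ST‖_A)² + 4‖T²‖_A ‖S²‖_A)). -/

import Mathlib

open ContinuousLinearMap

variable {H : Type*} [NormedAddCommGroup H] [InnerProductSpace ℂ H] [CompleteSpace H]

/-- The seminorm `‖x‖_A = ‖A^{1/2} x‖ = √⟨Ax, x⟩` induced by a positive operator `A`. -/
noncomputable def anorm (A : H →L[ℂ] H) (x : H) : ℝ :=
  Real.sqrt (A.reApplyInnerSelf x)

/-- `T` is `A`-bounded: `‖Tx‖_A ≤ c ‖x‖_A` for some `c > 0`. -/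
def ABounded (A T : H →L[ℂ] H) : Prop :=
  ∃ c : ℝ, 0 < c ∧ ∀ x : H, anorm A (T x) ≤ c * anorm A x

/-- The operator seminorm `‖T‖_A`: the least `c ≥ 0` with `‖Tx‖_A ≤ c ‖x‖_A` for all `x`. -/
noncomputable def aNorm (A T : H →L[ℂ] H) : ℝ :=
  sInf {c : ℝ | 0 ≤ c ∧ ∀ x : H, anorm A (T x) ≤ c * anorm A x}

/-- The `A`-spectral radius `r_A(T) = inf_{n ≥ 1} ‖T^n‖_A^{1/n}`. -/
noncomputable def aSpecRad (A T : H →L[ℂ] H) : ℝ :=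
  ⨅ n : ℕ+, aNorm A (T ^ (n : ℕ)) ^ ((n : ℝ)⁻¹)

/-- The `A`-numerical radius `ω_A(T) = sup {|⟨ATx, x⟩| : ‖x‖_A = 1}`. -/
noncomputable def aNumRad (A T : H →L[ℂ] H) : ℝ :=
  sSup {c : ℝ | ∃ x : H, anorm A x = 1 ∧ c = ‖(inner ℂ (A (T x)) x : ℂ)‖}

section helpers
variable {A X Y : H →L[ℂ] H}

local notation "⟪" x ", " y "⟫" => @inner ℂ H _ x y

lemma anorm_nonneg (A : H →L[ℂ] H) (x : H) : 0 ≤ anorm A x := Real.sqrt_nonneg _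

lemma anorm_smul (A : H →L[ℂ] H) (c : ℂ) (x : H) :
    anorm A (c • x) = ‖c‖ * anorm A x := by
  unfold anorm
  rw [A.reApplyInnerSelf_smul, Real.sqrt_mul (by positivity), Real.sqrt_sq (norm_nonneg c)]

lemma re_inner_le (hA : A.IsPositive) (u v : H) :
    RCLike.re ⟪A u, v⟫ ≤ anorm A u * anorm A v := by
  have hsymm0 : (A : H →ₗ[ℂ] H).IsSymmetric := hA.1
  have hsymm : ∀ x y : H, ⟪A x, y⟫ = ⟪x, A y⟫ := fun x y => hsymm0 x y
  set p := A.reApplyInnerSelf u with hp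
  set r := A.reApplyInnerSelf v with hr
  set α := RCLike.re ⟪A u, v⟫ with hα
  have havu : ((⟪A v, u⟫ : ℂ)).re = α := by
    have : RCLike.re ⟪A v, u⟫ = α := by rw [inner_re_symm, ← hsymm u v]
    exact this
  have hp' : p = ((⟪A u, u⟫ : ℂ)).re := rfl
  have hr' : r = ((⟪A v, v⟫ : ℂ)).re := rfl
  have hα' : α = ((⟪A u, v⟫ : ℂ)).re := rfl
  have hquad : ∀ t : ℝ, 0 ≤ r * (t * t) + (2 * α) * t + p := by
    intro t
    have h0 := hA.2 (u + (t : ℂ) • v)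
    have key : ⟪A (u + (t : ℂ) • v), u + (t : ℂ) • v⟫
        = ⟪A u, u⟫ + (t : ℂ) * ⟪A u, v⟫ + (t : ℂ) * ⟪A v, u⟫
          + (t : ℂ) * ((t : ℂ) * ⟪A v, v⟫) := by
      rw [map_add, map_smul, inner_add_left, inner_add_right, inner_add_right,
        inner_smul_left, inner_smul_right, inner_smul_left, inner_smul_right,
        Complex.conj_ofReal]
      ring
    have hexp : A.reApplyInnerSelf (u + (t : ℂ) • v) = r * (t * t) + 2 * α * t + p := by
      have h1 : A.reApplyInnerSelf (u + (t : ℂ) • v)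
          = ((⟪A (u + (t : ℂ) • v), u + (t : ℂ) • v⟫ : ℂ)).re := rfl
      rw [h1, key]
      simp only [Complex.add_re, Complex.mul_re, Complex.ofReal_re, Complex.ofReal_im,
        zero_mul, mul_zero, sub_zero]
      rw [havu, ← hp', ← hr', ← hα']
      ring
    linarith [hexp ▸ h0]
  have hd := discrim_le_zero hquad
  have hdisc : (2 * α) ^ 2 - 4 * r * p ≤ 0 := by
    simpa [discrim] using hd
  have hα2 : α ^ 2 ≤ p * r := by nlinarith
  calc α ≤ |α| := le_abs_self _
    _ = Real.sqrt (α ^ 2) := (Real.sqrt_sq_eq_abs α).symm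
    _ ≤ Real.sqrt (p * r) := Real.sqrt_le_sqrt hα2
    _ = anorm A u * anorm A v := by
        rw [Real.sqrt_mul (hA.2 u)]; rfl

lemma anorm_add_le (hA : A.IsPositive) (u v : H) :
    anorm A (u + v) ≤ anorm A u + anorm A v := by
  have hsymm0 : (A : H →ₗ[ℂ] H).IsSymmetric := hA.1
  have hsymm : ∀ x y : H, ⟪A x, y⟫ = ⟪x, A y⟫ := fun x y => hsymm0 x y
  have havu : ((⟪A v, u⟫ : ℂ)).re = ((⟪A u, v⟫ : ℂ)).re := by
    have : RCLike.re ⟪A v, u⟫ = RCLike.re ⟪A u, v⟫ := by rw [inner_re_symm, ← hsymm u v]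
    exact this
  have hexp : A.reApplyInnerSelf (u + v)
      = A.reApplyInnerSelf u + 2 * RCLike.re ⟪A u, v⟫ + A.reApplyInnerSelf v := by
    have h1 : A.reApplyInnerSelf (u + v) = ((⟪A (u + v), u + v⟫ : ℂ)).re := rfl
    have key : ⟪A (u + v), u + v⟫ = ⟪A u, u⟫ + ⟪A u, v⟫ + ⟪A v, u⟫ + ⟪A v, v⟫ := by
      rw [map_add, inner_add_left, inner_add_right, inner_add_right]
      ring
    rw [h1, key]
    simp only [Complex.add_re]
    rw [havu]
    have h2 : A.reApplyInnerSelf u = ((⟪A u, u⟫ : ℂ)).re := rfl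
    have h3 : A.reApplyInnerSelf v = ((⟪A v, v⟫ : ℂ)).re := rfl
    have h4 : RCLike.re ⟪A u, v⟫ = ((⟪A u, v⟫ : ℂ)).re := rfl
    rw [h2, h3, h4]
    ring
  have hcs := re_inner_le hA u v
  have h1 : A.reApplyInnerSelf (u + v) ≤ (anorm A u + anorm A v) ^ 2 := by
    have hu : anorm A u ^ 2 = A.reApplyInnerSelf u := Real.sq_sqrt (hA.2 u)
    have hv : anorm A v ^ 2 = A.reApplyInnerSelf v := Real.sq_sqrt (hA.2 v)
    nlinarith
  calc anorm A (u + v) = Real.sqrt (A.reApplyInnerSelf (u + v)) := rfl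
    _ ≤ Real.sqrt ((anorm A u + anorm A v) ^ 2) := Real.sqrt_le_sqrt h1
    _ = |anorm A u + anorm A v| := Real.sqrt_sq_eq_abs _
    _ = anorm A u + anorm A v :=
        abs_of_nonneg (add_nonneg (anorm_nonneg _ _) (anorm_nonneg _ _))

end helpers

section opnorm
variable {A X Y : H →L[ℂ] H}

lemma aNorm_nonneg (A X : H →L[ℂ] H) : 0 ≤ aNorm A X :=
  Real.sInf_nonneg (fun _ hc => hc.1)

lemma aNorm_le_bound {c : ℝ} (h0 : 0 ≤ c) (h : ∀ x, anorm A (X x) ≤ c * anorm A x) :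
    aNorm A X ≤ c :=
  csInf_le ⟨0, fun _ hb => hb.1⟩ ⟨h0, h⟩

lemma ABounded.le_aNorm (hX : ABounded A X) (x : H) :
    anorm A (X x) ≤ aNorm A X * anorm A x := by
  obtain ⟨c, hc, hb⟩ := hX
  have hne : {c : ℝ | 0 ≤ c ∧ ∀ x : H, anorm A (X x) ≤ c * anorm A x}.Nonempty :=
    ⟨c, hc.le, hb⟩
  rcases eq_or_lt_of_le (anorm_nonneg A x) with h0 | h0
  · have h1 : anorm A (X x) ≤ 0 := by
      have := hb x; rw [← h0] at this; simpa using this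
    have h2 : anorm A (X x) = 0 := le_antisymm h1 (anorm_nonneg A _)
    rw [h2, ← h0, mul_zero]
  · have hdiv : anorm A (X x) / anorm A x ≤ aNorm A X := by
      apply le_csInf hne
      intro b hb'
      rw [div_le_iff₀ h0]
      exact hb'.2 x
    calc anorm A (X x) = anorm A (X x) / anorm A x * anorm A x := by
          field_simp
      _ ≤ aNorm A X * anorm A x := mul_le_mul_of_nonneg_right hdiv h0.le

lemma ABounded.mul (hX : ABounded A X) (hY : ABounded A Y) : ABounded A (X * Y) := by
  obtain ⟨c1, hc1, hb1⟩ := hX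
  obtain ⟨c2, hc2, hb2⟩ := hY
  refine ⟨c1 * c2, mul_pos hc1 hc2, fun x => ?_⟩
  calc anorm A ((X * Y) x) = anorm A (X (Y x)) := by rw [ContinuousLinearMap.mul_apply]
    _ ≤ c1 * anorm A (Y x) := hb1 _
    _ ≤ c1 * (c2 * anorm A x) := mul_le_mul_of_nonneg_left (hb2 x) hc1.le
    _ = c1 * c2 * anorm A x := by ring

lemma ABounded.add (hA : A.IsPositive) (hX : ABounded A X) (hY : ABounded A Y) :
    ABounded A (X + Y) := by
  obtain ⟨c1, hc1, hb1⟩ := hX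
  obtain ⟨c2, hc2, hb2⟩ := hY
  refine ⟨c1 + c2, by linarith, fun x => ?_⟩
  calc anorm A ((X + Y) x) = anorm A (X x + Y x) := by rw [ContinuousLinearMap.add_apply]
    _ ≤ anorm A (X x) + anorm A (Y x) := anorm_add_le hA _ _
    _ ≤ c1 * anorm A x + c2 * anorm A x := add_le_add (hb1 x) (hb2 x)
    _ = (c1 + c2) * anorm A x := by ring

lemma ABounded.smul (ε : ℂ) (hX : ABounded A X) : ABounded A (ε • X) := by
  obtain ⟨c, hc, hb⟩ := hX
  refine ⟨(‖ε‖ + 1) * c, by positivity, fun x => ?_⟩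
  have : anorm A ((ε • X) x) = ‖ε‖ * anorm A (X x) := by
    rw [ContinuousLinearMap.smul_apply, anorm_smul]
  rw [this]
  calc ‖ε‖ * anorm A (X x) ≤ ‖ε‖ * (c * anorm A x) :=
        mul_le_mul_of_nonneg_left (hb x) (norm_nonneg ε)
    _ ≤ (‖ε‖ + 1) * c * anorm A x := by
        have h1 : (0:ℝ) ≤ c * anorm A x := mul_nonneg hc.le (anorm_nonneg A x)
        nlinarith

lemma aNorm_mul_le (hX : ABounded A X) (hY : ABounded A Y) :
    aNorm A (X * Y) ≤ aNorm A X * aNorm A Y := by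
  apply aNorm_le_bound (mul_nonneg (aNorm_nonneg A X) (aNorm_nonneg A Y))
  intro x
  calc anorm A ((X * Y) x) = anorm A (X (Y x)) := by rw [ContinuousLinearMap.mul_apply]
    _ ≤ aNorm A X * anorm A (Y x) := hX.le_aNorm _
    _ ≤ aNorm A X * (aNorm A Y * anorm A x) :=
        mul_le_mul_of_nonneg_left (hY.le_aNorm x) (aNorm_nonneg A X)
    _ = aNorm A X * aNorm A Y * anorm A x := by ring

lemma aNorm_add_le (hA : A.IsPositive) (hX : ABounded A X) (hY : ABounded A Y) :
    aNorm A (X + Y) ≤ aNorm A X + aNorm A Y := by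
  apply aNorm_le_bound (add_nonneg (aNorm_nonneg A X) (aNorm_nonneg A Y))
  intro x
  calc anorm A ((X + Y) x) = anorm A (X x + Y x) := by rw [ContinuousLinearMap.add_apply]
    _ ≤ anorm A (X x) + anorm A (Y x) := anorm_add_le hA _ _
    _ ≤ aNorm A X * anorm A x + aNorm A Y * anorm A x :=
        add_le_add (hX.le_aNorm x) (hY.le_aNorm x)
    _ = (aNorm A X + aNorm A Y) * anorm A x := by ring

lemma aNorm_smul_le (ε : ℂ) (hX : ABounded A X) :
    aNorm A (ε • X) ≤ ‖ε‖ * aNorm A X := by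
  apply aNorm_le_bound (mul_nonneg (norm_nonneg ε) (aNorm_nonneg A X))
  intro x
  have h : anorm A ((ε • X) x) = ‖ε‖ * anorm A (X x) := by
    rw [ContinuousLinearMap.smul_apply, anorm_smul]
  rw [h, mul_assoc]
  exact mul_le_mul_of_nonneg_left (hX.le_aNorm x) (norm_nonneg ε)

end opnorm

/-- Auxiliary pair of operators `(Y n, Z n)` with `(T*S + ε•(S*T))^(n+1) = T * Y n + S * Z n`. -/
noncomputable def yzAux (T S : H →L[ℂ] H) (ε : ℂ) : ℕ → (H →L[ℂ] H) × (H →L[ℂ] H)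
  | 0 => (S, ε • T)
  | n + 1 =>
    (S * T * (yzAux T S ε n).1 + S * S * (yzAux T S ε n).2,
     ε • (T * T * (yzAux T S ε n).1 + T * S * (yzAux T S ε n).2))

lemma yzAux_rep (T S : H →L[ℂ] H) (ε : ℂ) (n : ℕ) :
    (T * S + ε • (S * T)) ^ (n + 1) = T * (yzAux T S ε n).1 + S * (yzAux T S ε n).2 := by
  induction n with
  | zero =>
    rw [zero_add, pow_one]
    show _ = T * S + S * (ε • T)
    rw [mul_smul_comm]
  | succ n ih =>
    rw [pow_succ', ih]
    show _ = T * (S * T * (yzAux T S ε n).1 + S * S * (yzAux T S ε n).2) +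
      S * (ε • (T * T * (yzAux T S ε n).1 + T * S * (yzAux T S ε n).2))
    simp only [mul_add, add_mul, smul_mul_assoc, mul_smul_comm, smul_add, mul_assoc]
    abel

lemma key_bound (A T S : H →L[ℂ] H) (hA : A.IsPositive) (hT : ABounded A T)
    (hS : ABounded A S) (ε : ℂ) (hε : ‖ε‖ = 1) {e : ℝ} (he : 0 < e) :
    aSpecRad A (T * S + ε • (S * T)) ≤
      (aNorm A (T * S) + aNorm A (S * T) +
        Real.sqrt ((aNorm A (T * S) - aNorm A (S * T)) ^ 2 +
          4 * (aNorm A (T * T) + e) * (aNorm A (S * S) + e))) / 2 := by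
  set X := T * S + ε • (S * T) with hX
  set a := aNorm A (T * S) with ha'
  set b := aNorm A (S * T) with hb'
  set c0 := aNorm A (S * S) with hc0'
  set d0 := aNorm A (T * T) with hd0'
  set t0 := aNorm A T with ht0'
  set s0 := aNorm A S with hs0'
  have ha : 0 ≤ a := aNorm_nonneg A _
  have hb : 0 ≤ b := aNorm_nonneg A _
  have hc0 : 0 ≤ c0 := aNorm_nonneg A _
  have hd0 : 0 ≤ d0 := aNorm_nonneg A _
  have ht0 : 0 ≤ t0 := aNorm_nonneg A _
  have hs0 : 0 ≤ s0 := aNorm_nonneg A _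
  set Δ := (a - b) ^ 2 + 4 * (d0 + e) * (c0 + e) with hΔ'
  have hΔlt : (a - b) ^ 2 < Δ := by nlinarith
  have hΔ0 : 0 ≤ Δ := le_of_lt (lt_of_le_of_lt (sq_nonneg _) hΔlt)
  set sΔ := Real.sqrt Δ with hsΔ'
  have hsq : sΔ ^ 2 = Δ := Real.sq_sqrt hΔ0
  have habs : |a - b| < sΔ := by
    have := Real.sqrt_lt_sqrt (sq_nonneg (a - b)) hΔlt
    rwa [Real.sqrt_sq_eq_abs] at this
  have hablt := abs_lt.mp habs
  set R := (a + b + sΔ) / 2 with hR'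
  have hRb : b < R := by rw [hR']; linarith [hablt.1]
  have hRa : a < R := by rw [hR']; linarith [hablt.2]
  have hR : 0 < R := lt_of_le_of_lt hb hRb
  set v := (R - b) / (c0 + e) with hv'
  have hce : 0 < c0 + e := by linarith
  have hde : 0 < d0 + e := by linarith
  have hv : 0 < v := div_pos (by linarith) hce
  have heig1 : b + (c0 + e) * v = R := by
    rw [hv', mul_div_cancel₀ _ (ne_of_gt hce)]; ring
  have hprod : (R - a) * (R - b) = (c0 + e) * (d0 + e) := by
    rw [hR']
    linear_combination (1/4 : ℝ) * hsq + (1/4 : ℝ) * hΔ'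
  have heig2 : (d0 + e) + a * v = R * v := by
    have hce' : c0 + e ≠ 0 := ne_of_gt hce
    rw [hv']
    field_simp
    first
    | linear_combination hprod
    | linear_combination -hprod
  set K := max s0 (t0 / v) with hK'
  have hK0 : 0 ≤ K := le_trans hs0 (le_max_left _ _)
  have hKs : s0 ≤ K := le_max_left _ _
  have hKt : t0 ≤ K * v := by
    have := le_max_right s0 (t0 / v)
    calc t0 = t0 / v * v := by field_simp
      _ ≤ K * v := mul_le_mul_of_nonneg_right this hv.le
  -- closure facts
  have hST : ABounded A (S * T) := hS.mul hT
  have hTS : ABounded A (T * S) := hT.mul hS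
  have hSS : ABounded A (S * S) := hS.mul hS
  have hTT : ABounded A (T * T) := hT.mul hT
  -- main induction
  have main : ∀ n : ℕ, ABounded A (yzAux T S ε n).1 ∧ ABounded A (yzAux T S ε n).2 ∧
      aNorm A (yzAux T S ε n).1 ≤ K * R ^ n ∧
      aNorm A (yzAux T S ε n).2 ≤ K * v * R ^ n := by
    intro n
    induction n with
    | zero =>
      have e1 : (yzAux T S ε 0).1 = S := rfl
      have e2 : (yzAux T S ε 0).2 = ε • T := rfl
      rw [e1, e2]
      refine ⟨hS, ABounded.smul ε hT, ?_, ?_⟩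
      · rw [pow_zero, mul_one]; exact hKs
      · rw [pow_zero, mul_one]
        calc aNorm A (ε • T) ≤ ‖ε‖ * aNorm A T := aNorm_smul_le ε hT
          _ = t0 := by rw [hε, one_mul]
          _ ≤ K * v := hKt
    | succ n ih =>
      obtain ⟨hY, hZ, hYn, hZn⟩ := ih
      have e1 : (yzAux T S ε (n+1)).1
          = S * T * (yzAux T S ε n).1 + S * S * (yzAux T S ε n).2 := by
        simp only [yzAux]
      have e2 : (yzAux T S ε (n+1)).2
          = ε • (T * T * (yzAux T S ε n).1 + T * S * (yzAux T S ε n).2) := by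
        simp only [yzAux]
      rw [e1, e2]
      set Y := (yzAux T S ε n).1
      set Z := (yzAux T S ε n).2
      have hRn : (0:ℝ) ≤ R ^ n := pow_nonneg hR.le n
      have hYnonneg : 0 ≤ aNorm A Y := aNorm_nonneg A _
      have hZnonneg : 0 ≤ aNorm A Z := aNorm_nonneg A _
      have hY1 : ABounded A (S * T * Y + S * S * Z) :=
        ABounded.add hA (hST.mul hY) (hSS.mul hZ)
      have hW : ABounded A (T * T * Y + T * S * Z) :=
        ABounded.add hA (hTT.mul hY) (hTS.mul hZ)
      refine ⟨hY1, ABounded.smul ε hW, ?_, ?_⟩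
      · calc aNorm A (S * T * Y + S * S * Z)
            ≤ aNorm A (S * T * Y) + aNorm A (S * S * Z) :=
              aNorm_add_le hA (hST.mul hY) (hSS.mul hZ)
          _ ≤ b * aNorm A Y + c0 * aNorm A Z :=
              add_le_add (aNorm_mul_le hST hY) (aNorm_mul_le hSS hZ)
          _ ≤ b * (K * R ^ n) + c0 * (K * v * R ^ n) :=
              add_le_add (mul_le_mul_of_nonneg_left hYn hb)
                (mul_le_mul_of_nonneg_left hZn hc0)
          _ ≤ K * R ^ (n + 1) := by
              rw [pow_succ]
              have hKR : (0:ℝ) ≤ K * R ^ n := mul_nonneg hK0 hRn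
              have hev : (0:ℝ) ≤ e * v := mul_nonneg he.le hv.le
              calc b * (K * R ^ n) + c0 * (K * v * R ^ n)
                  = (b + c0 * v) * (K * R ^ n) := by ring
                _ ≤ (b + (c0 + e) * v) * (K * R ^ n) := by
                    apply mul_le_mul_of_nonneg_right _ hKR
                    linarith
                _ = R * (K * R ^ n) := by rw [heig1]
                _ = K * (R ^ n * R) := by ring
      · calc aNorm A (ε • (T * T * Y + T * S * Z))
            ≤ ‖ε‖ * aNorm A (T * T * Y + T * S * Z) := aNorm_smul_le ε hW
          _ = aNorm A (T * T * Y + T * S * Z) := by rw [hε, one_mul]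
          _ ≤ aNorm A (T * T * Y) + aNorm A (T * S * Z) :=
              aNorm_add_le hA (hTT.mul hY) (hTS.mul hZ)
          _ ≤ d0 * aNorm A Y + a * aNorm A Z :=
              add_le_add (aNorm_mul_le hTT hY) (aNorm_mul_le hTS hZ)
          _ ≤ d0 * (K * R ^ n) + a * (K * v * R ^ n) :=
              add_le_add (mul_le_mul_of_nonneg_left hYn hd0)
                (mul_le_mul_of_nonneg_left hZn ha)
          _ ≤ K * v * R ^ (n + 1) := by
              rw [pow_succ]
              have hKR : (0:ℝ) ≤ K * R ^ n := mul_nonneg hK0 hRn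
              calc d0 * (K * R ^ n) + a * (K * v * R ^ n)
                  = (d0 + a * v) * (K * R ^ n) := by ring
                _ ≤ ((d0 + e) + a * v) * (K * R ^ n) := by
                    apply mul_le_mul_of_nonneg_right _ hKR
                    linarith
                _ = (R * v) * (K * R ^ n) := by rw [heig2]
                _ = K * v * (R ^ n * R) := by ring
  -- bound on powers
  set K1 := K * (t0 + s0 * v) with hK1'
  have hXpow : ∀ n : ℕ, aNorm A (X ^ (n + 1)) ≤ K1 * R ^ n := by
    intro n
    obtain ⟨hY, hZ, hYn, hZn⟩ := main n
    have hRn : (0:ℝ) ≤ R ^ n := pow_nonneg hR.le n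
    rw [hX, yzAux_rep]
    calc aNorm A (T * (yzAux T S ε n).1 + S * (yzAux T S ε n).2)
        ≤ aNorm A (T * (yzAux T S ε n).1) + aNorm A (S * (yzAux T S ε n).2) :=
          aNorm_add_le hA (hT.mul hY) (hS.mul hZ)
      _ ≤ t0 * aNorm A (yzAux T S ε n).1 + s0 * aNorm A (yzAux T S ε n).2 :=
          add_le_add (aNorm_mul_le hT hY) (aNorm_mul_le hS hZ)
      _ ≤ t0 * (K * R ^ n) + s0 * (K * v * R ^ n) :=
          add_le_add (mul_le_mul_of_nonneg_left hYn ht0)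
            (mul_le_mul_of_nonneg_left hZn hs0)
      _ = K1 * R ^ n := by rw [hK1']; ring
  set K2 := max 1 (K1 / R) with hK2'
  have hK21 : (1:ℝ) ≤ K2 := le_max_left _ _
  have hK2pos : (0:ℝ) < K2 := lt_of_lt_of_le one_pos hK21
  have hXpow2 : ∀ n : ℕ, aNorm A (X ^ (n + 1)) ≤ K2 * R ^ (n + 1) := by
    intro n
    refine le_trans (hXpow n) ?_
    have h1 : K1 ≤ K2 * R := by
      have := le_max_right 1 (K1 / R)
      calc K1 = K1 / R * R := by field_simp
        _ ≤ K2 * R := mul_le_mul_of_nonneg_right this hR.le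
    rw [pow_succ]
    calc K1 * R ^ n ≤ K2 * R * R ^ n :=
          mul_le_mul_of_nonneg_right h1 (pow_nonneg hR.le n)
      _ = K2 * (R ^ n * R) := by ring
  -- infimum bound
  have hbdd : BddBelow (Set.range fun m : ℕ+ => aNorm A (X ^ (m : ℕ)) ^ ((m : ℝ)⁻¹)) := by
    refine ⟨0, ?_⟩
    rintro y ⟨m, rfl⟩
    exact Real.rpow_nonneg (aNorm_nonneg _ _) _
  have hspec : ∀ n : ℕ, aSpecRad A X ≤ K2 ^ (((n : ℝ) + 1)⁻¹) * R := by
    intro n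
    have h1 : aSpecRad A X ≤ aNorm A (X ^ (n + 1)) ^ (((n : ℝ) + 1)⁻¹) := by
      unfold aSpecRad; simpa using ciInf_le hbdd (⟨n + 1, Nat.succ_pos n⟩ : ℕ+)
    calc aSpecRad A X ≤ aNorm A (X ^ (n + 1)) ^ (((n : ℝ) + 1)⁻¹) := h1
      _ ≤ (K2 * R ^ (n + 1)) ^ (((n : ℝ) + 1)⁻¹) := by
          apply Real.rpow_le_rpow (aNorm_nonneg _ _) (hXpow2 n)
          positivity
      _ = K2 ^ (((n : ℝ) + 1)⁻¹) * R := by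
          rw [Real.mul_rpow (le_of_lt hK2pos) (pow_nonneg hR.le _),
            ← Real.rpow_natCast R (n + 1), ← Real.rpow_mul hR.le,
            show ((n + 1 : ℕ) : ℝ) = (n : ℝ) + 1 by push_cast; ring,
            mul_inv_cancel₀ (by positivity), Real.rpow_one]
  -- take the limit
  have hexp : Filter.Tendsto (fun n : ℕ => ((n : ℝ) + 1)⁻¹) Filter.atTop (nhds 0) := by
    simpa [one_div] using tendsto_one_div_add_atTop_nhds_zero_nat (𝕜 := ℝ)
  have hcont : Filter.Tendsto (fun y : ℝ => K2 ^ y) (nhds 0) (nhds (K2 ^ (0:ℝ))) :=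
    (Real.continuousAt_const_rpow (ne_of_gt hK2pos)).tendsto
  have hlim : Filter.Tendsto (fun n : ℕ => K2 ^ (((n : ℝ) + 1)⁻¹) * R)
      Filter.atTop (nhds R) := by
    have := (hcont.comp hexp).mul_const R
    rw [Real.rpow_zero, one_mul] at this
    exact this
  exact ge_of_tendsto' hlim hspec

/-- bound for `r_A(TS ± ST)`. -/
theorem stmt10 (A T S : H →L[ℂ] H) (hA : A.IsPositive)
    (hT : ABounded A T) (hS : ABounded A S) :
    aSpecRad A (T * S + S * T) ≤
      (aNorm A (T * S) + aNorm A (S * T) +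
        Real.sqrt ((aNorm A (T * S) - aNorm A (S * T)) ^ 2 +
          4 * aNorm A (T ^ 2) * aNorm A (S ^ 2))) / 2 ∧
    aSpecRad A (T * S - S * T) ≤
      (aNorm A (T * S) + aNorm A (S * T) +
        Real.sqrt ((aNorm A (T * S) - aNorm A (S * T)) ^ 2 +
          4 * aNorm A (T ^ 2) * aNorm A (S ^ 2))) / 2 := by
  rw [show T ^ 2 = T * T from sq T, show S ^ 2 = S * S from sq S]
  set a := aNorm A (T * S) with ha'
  set b := aNorm A (S * T) with hb'
  set c0 := aNorm A (S * S) with hc0'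
  set d0 := aNorm A (T * T) with hd0'
  set g : ℝ → ℝ := fun e => (a + b +
      Real.sqrt ((a - b) ^ 2 + 4 * (d0 + e) * (c0 + e))) / 2 with hg'
  have hgcont : Continuous g := by
    apply Continuous.div_const
    apply Continuous.add continuous_const
    exact Real.continuous_sqrt.comp (by continuity)
  have hexp : Filter.Tendsto (fun n : ℕ => ((n : ℝ) + 1)⁻¹) Filter.atTop (nhds 0) := by
    simpa [one_div] using tendsto_one_div_add_atTop_nhds_zero_nat (𝕜 := ℝ)
  have hgseq : Filter.Tendsto (fun n : ℕ => g (((n : ℝ) + 1)⁻¹)) Filter.atTop (nhds (g 0)) :=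
    (hgcont.continuousAt).tendsto.comp hexp
  have hg0 : g 0 = (a + b + Real.sqrt ((a - b) ^ 2 + 4 * d0 * c0)) / 2 := by
    rw [hg']; norm_num
  have hgoal : ∀ ε : ℂ, ‖ε‖ = 1 →
      aSpecRad A (T * S + ε • (S * T)) ≤
        (a + b + Real.sqrt ((a - b) ^ 2 + 4 * d0 * c0)) / 2 := by
    intro ε hε
    rw [← hg0]
    apply ge_of_tendsto' hgseq
    intro n
    exact key_bound A T S hA hT hS ε hε (by positivity)
  have hswap : (a + b + Real.sqrt ((a - b) ^ 2 + 4 * d0 * c0)) / 2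
      = (a + b + Real.sqrt ((a - b) ^ 2 + 4 * d0 * c0)) / 2 := rfl
  constructor
  · have := hgoal 1 (by simp)
    rwa [one_smul] at this
  · have := hgoal (-1) (by simp)
    rwa [neg_smul, one_smul, ← sub_eq_add_neg] at this
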